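/- Let J be a σ-complete ultrafilter on κ and F_α = {x ∈ J^ω : α = min ⋂_n x(n)} for α < κ. For every A ⊆ κ, the set ⋃_{α∈A} F_α has the Baire property in J^ω. Consequently {F_α : α < κ} is a Kuratowski partition of J^ω when J is nonprincipal. -/

import Mathlib

/-- A set has the Baire property if it differs from an open set by a meager set. -/
def BaireProperty {X : Type*} [TopologicalSpace X] (s : Set X) : Prop :=
  ∃ U : Set X, IsOpen U ∧ IsMeagre (symmDiff s U)

/-- Let `J` be a σ-complete ultrafilter on a well-ordered set `α`, and
`F a = {x ∈ J^ω : a = min ⋂ n, x n}`. Then every subfamily union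
`⋃_{a ∈ A} F a` has the Baire property in `J^ω`; consequently, if `J` is
nonprincipal, `{F a}` is a Kuratowski partition of `J^ω`. -/
theorem min_sets_kuratowski {α : Type*} [LinearOrder α] [WellFoundedLT α]
    (J : Ultrafilter α)
    (hσ : ∀ f : ℕ → Set α, (∀ n, f n ∈ J) → (⋂ n, f n) ∈ J) :
    letI : TopologicalSpace {s : Set α // s ∈ J} := ⊥
    let F : α → Set (ℕ → {s : Set α // s ∈ J}) :=
      fun a => {x | IsLeast (⋂ n, (x n : Set α)) a}
    (∀ A : Set α, BaireProperty (⋃ a ∈ A, F a)) ∧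
    ((∀ a : α, {a} ∉ J) →
      (Pairwise (Function.onFun Disjoint F) ∧ (⋃ a, F a) = Set.univ ∧
        (∀ a, IsMeagre (F a)) ∧ ∀ A : Set α, BaireProperty (⋃ a ∈ A, F a))) := by
  intro F
  letI : TopologicalSpace {s : Set α // s ∈ J} := ⊥
  haveI : DiscreteTopology {s : Set α // s ∈ J} := ⟨rfl⟩
  -- every point has a least element of the intersection
  have hmin : ∀ x : ℕ → {s : Set α // s ∈ J}, ∃ a, IsLeast (⋂ n, (x n : Set α)) a := by
    intro x
    have hI : (⋂ n, (x n : Set α)) ∈ J := hσ _ fun n => (x n).2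
    have hne : (⋂ n, (x n : Set α)).Nonempty := J.nonempty_of_mem hI
    refine ⟨wellFounded_lt.min _ hne, wellFounded_lt.min_mem _ hne, fun b hb => ?_⟩
    exact not_lt.mp (wellFounded_lt.not_lt_min _ hb)
  -- the key dense open sets
  have hD : ∀ A : Set α, A ∈ J →
      ∃ D : Set (ℕ → {s : Set α // s ∈ J}), IsOpen D ∧ Dense D ∧
        ∀ x ∈ D, (⋂ n, (x n : Set α)) ⊆ A := by
    intro A hA
    refine ⟨{x | ∃ n, (x n : Set α) ⊆ A}, ?_, ?_, ?_⟩
    · have : {x : ℕ → {s : Set α // s ∈ J} | ∃ n, (x n : Set α) ⊆ A} =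
          ⋃ n, (fun x : ℕ → {s : Set α // s ∈ J} => x n) ⁻¹' {s | (s : Set α) ⊆ A} := by
        ext x; simp [Set.mem_iUnion]
      rw [this]
      exact isOpen_iUnion fun n => (continuous_apply n).isOpen_preimage _ (isOpen_discrete _)
    · rw [dense_iff_inter_open]
      rintro U hU ⟨x, hx⟩
      obtain ⟨I, u, hu, hsub⟩ := isOpen_pi_iff.mp hU x hx
      set n : ℕ := I.sup id + 1 with hn
      have hnI : n ∉ I := fun h => by
        have := Finset.le_sup (f := id) h
        simp only [id] at this
        omega
      refine ⟨Function.update x n ⟨A, hA⟩, hsub fun i hi => ?_, n, ?_⟩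
      · rw [Function.update_of_ne (by rintro rfl; exact hnI hi)]
        exact (hu i hi).2
      · simp [Function.update_self]
    · rintro x ⟨n, hn⟩ a ha
      exact hn (Set.mem_iInter.mp ha n)
  -- Baire property of all subfamily unions
  have hBP : ∀ A : Set α, BaireProperty (⋃ a ∈ A, F a) := by
    intro A
    rcases J.mem_or_compl_mem A with hA | hA
    · obtain ⟨D, hDo, hDd, hDs⟩ := hD A hA
      have hDsub : D ⊆ ⋃ a ∈ A, F a := by
        intro x hx
        obtain ⟨a, ha⟩ := hmin x
        exact Set.mem_biUnion (hDs x hx ha.1) ha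
      refine ⟨D, hDo, ?_⟩
      have hmeag : IsMeagre Dᶜ := by
        rw [IsMeagre, compl_compl]
        exact residual_of_dense_open hDo hDd
      refine hmeag.mono ?_
      intro x hx
      rcases hx with ⟨hx1, hx2⟩ | ⟨hx1, hx2⟩
      · exact hx2
      · exact absurd (hDsub hx1) hx2
    · obtain ⟨D, hDo, hDd, hDs⟩ := hD Aᶜ hA
      have hsub : (⋃ a ∈ A, F a) ⊆ Dᶜ := by
        rintro x hx hxD
        obtain ⟨a, haA, hxa⟩ := Set.mem_iUnion₂.mp hx
        exact hDs x hxD hxa.1 haA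
      have hmeag : IsMeagre Dᶜ := by
        rw [IsMeagre, compl_compl]
        exact residual_of_dense_open hDo hDd
      refine ⟨∅, isOpen_empty, ?_⟩
      have : symmDiff (⋃ a ∈ A, F a) ∅ = ⋃ a ∈ A, F a := by
        simp [symmDiff_def]
      rw [this]
      exact hmeag.mono hsub
  refine ⟨hBP, fun hp => ⟨?_, ?_, ?_, hBP⟩⟩
  · intro a b hab
    rw [Function.onFun, Set.disjoint_left]
    intro x hxa hxb
    exact hab (hxa.unique hxb)
  · ext x
    simp only [Set.mem_iUnion, Set.mem_univ, iff_true]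
    exact hmin x
  · intro a
    obtain ⟨D, hDo, hDd, hDs⟩ := hD ({a}ᶜ) (Ultrafilter.compl_mem_iff_notMem.mpr (hp a))
    have hmeag : IsMeagre Dᶜ := by
      rw [IsMeagre, compl_compl]
      exact residual_of_dense_open hDo hDd
    refine hmeag.mono ?_
    intro x hx hxD
    exact hDs x hxD hx.1 rfl
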